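/- Non-lockability bound for the trace norm: let H_A and H_B be finite-dimensional complex Hilbert spaces and let Δ be a Hermitian matrix on H_A ⊗ H_B. Then ‖Δ‖₁ ≤ (dim H_B)² · sup{ |Tr[(X ⊗ Y) Δ]| : X a matrix on H_A with ‖X‖∞ ≤ 1, Y a matrix on H_B with ‖Y‖∞ ≤ 1 }. -/

import Mathlib

open scoped ComplexOrder Matrix Kronecker

/-- The trace norm `‖M‖₁ = Tr[√(Mᴴ M)]` of a square complex matrix
(the sum of its singular values). -/
noncomputable def traceNorm {ι : Type*} [Fintype ι] [DecidableEq ι] (M : Matrix ι ι ℂ) : ℝ :=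
  (((Matrix.posSemidef_conjTranspose_mul_self M).1.eigenvectorUnitary.1 *
    (Matrix.diagonal ((↑) ∘ (√·) ∘ (Matrix.posSemidef_conjTranspose_mul_self M).1.eigenvalues) :
      Matrix ι ι ℂ) *
    (star (Matrix.posSemidef_conjTranspose_mul_self M).1.eigenvectorUnitary : Matrix ι ι ℂ)).trace).re

/-- The operator norm `‖M‖∞` of a complex matrix: the largest singular value, i.e. the
operator norm of the induced map between Euclidean spaces. -/
noncomputable def opNorm {ι κ : Type*} [Fintype ι] [Fintype κ] [DecidableEq ι]
    (M : Matrix κ ι ℂ) : ℝ :=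
  ‖LinearMap.toContinuousLinearMap (Matrix.toEuclideanLin M)‖

/-- **Non-lockability bound for the trace norm**: for finite-dimensional complex Hilbert
spaces `H_A = ℂ^{ιA}`, `H_B = ℂ^{ιB}` and a Hermitian matrix `Δ` on `H_A ⊗ H_B`,
`‖Δ‖₁ ≤ (dim H_B)² · sup { |Tr[(X ⊗ Y) Δ]| : ‖X‖∞ ≤ 1, ‖Y‖∞ ≤ 1 }`. -/

lemma sum_sq_eq_re_dot {ι : Type*} [Fintype ι] (x : ι → ℂ) :
    (∑ i, ‖x i‖^2) = (star x ⬝ᵥ x).re := by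
  simp [dotProduct, Complex.re_sum, ← Complex.normSq_eq_conj_mul_self,
    Complex.sq_norm]

lemma opNorm_nonneg {ι κ : Type*} [Fintype ι] [Fintype κ] [DecidableEq ι]
    (M : Matrix κ ι ℂ) : 0 ≤ opNorm M := norm_nonneg _

lemma mulVec_sq_sum_le {ι κ : Type*} [Fintype ι] [Fintype κ] [DecidableEq ι]
    (M : Matrix κ ι ℂ) (v : ι → ℂ) :
    ∑ a, ‖(M *ᵥ v) a‖^2 ≤ (opNorm M)^2 * ∑ i, ‖v i‖^2 := by
  have h := (LinearMap.toContinuousLinearMap (Matrix.toEuclideanLin M)).le_opNorm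
    ((WithLp.equiv 2 (ι → ℂ)).symm v)
  rw [LinearMap.coe_toContinuousLinearMap'] at h
  rw [WithLp.equiv_symm_apply, Matrix.toEuclideanLin_apply_piLp_toLp, EuclideanSpace.norm_eq,
    EuclideanSpace.norm_eq] at h
  have h1 : 0 ≤ ∑ a, ‖(M *ᵥ v) a‖^2 := Finset.sum_nonneg fun _ _ => sq_nonneg _
  have h2 : 0 ≤ ∑ i, ‖v i‖^2 := Finset.sum_nonneg fun _ _ => sq_nonneg _
  calc ∑ a, ‖(M *ᵥ v) a‖^2 = (Real.sqrt (∑ a, ‖(M *ᵥ v) a‖^2))^2 := (Real.sq_sqrt h1).symm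
    _ ≤ (opNorm M * Real.sqrt (∑ i, ‖v i‖^2))^2 := by
        apply pow_le_pow_left₀ (Real.sqrt_nonneg _)
        exact h
    _ = (opNorm M)^2 * ∑ i, ‖v i‖^2 := by
        rw [mul_pow, Real.sq_sqrt h2]

lemma opNorm_le_of_sq {ι κ : Type*} [Fintype ι] [Fintype κ] [DecidableEq ι]
    (M : Matrix κ ι ℂ) (c : ℝ) (hc : 0 ≤ c)
    (h : ∀ v : ι → ℂ, ∑ a, ‖(M *ᵥ v) a‖^2 ≤ c^2 * ∑ i, ‖v i‖^2) :
    opNorm M ≤ c := by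
  apply ContinuousLinearMap.opNorm_le_bound _ hc
  intro x
  rw [LinearMap.coe_toContinuousLinearMap']
  have hx : x = (WithLp.equiv 2 (ι → ℂ)).symm (WithLp.equiv 2 (ι → ℂ) x) := rfl
  rw [hx, WithLp.equiv_symm_apply, Matrix.toEuclideanLin_apply_piLp_toLp, EuclideanSpace.norm_eq,
    EuclideanSpace.norm_eq]
  set v := WithLp.equiv 2 (ι → ℂ) x
  have := h v
  calc Real.sqrt (∑ a, ‖((WithLp.equiv 2 (κ → ℂ)).symm (M *ᵥ v)) a‖^2)
      = Real.sqrt (∑ a, ‖(M *ᵥ v) a‖^2) := rfl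
    _ ≤ Real.sqrt (c^2 * ∑ i, ‖v i‖^2) := Real.sqrt_le_sqrt (h v)
    _ = c * Real.sqrt (∑ i, ‖v i‖^2) := by
        rw [Real.sqrt_mul (sq_nonneg c), Real.sqrt_sq hc]
    _ = c * Real.sqrt (∑ i, ‖((WithLp.equiv 2 (ι → ℂ)).symm v) i‖^2) := rfl

lemma entry_le_opNorm {ι κ : Type*} [Fintype ι] [Fintype κ] [DecidableEq ι]
    (M : Matrix κ ι ℂ) (a : κ) (b : ι) : ‖M a b‖ ≤ opNorm M := by
  have h := mulVec_sq_sum_le M (Pi.single b 1)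
  have hsingle : ∑ i, ‖(Pi.single b 1 : ι → ℂ) i‖^2 = 1 := by
    rw [Finset.sum_eq_single b]
    · simp
    · intro i _ hib; simp [Pi.single_apply, hib]
    · simp
  rw [hsingle, mul_one] at h
  have hterm : ‖M a b‖^2 ≤ ∑ a', ‖(M *ᵥ Pi.single b 1) a'‖^2 := by
    have : (M *ᵥ Pi.single b 1) a = M a b := by simp [Matrix.mulVec_single]
    rw [← this]
    exact Finset.single_le_sum (f := fun a' => ‖(M *ᵥ Pi.single b 1) a'‖^2)
      (fun _ _ => sq_nonneg _) (Finset.mem_univ a)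
  have := hterm.trans h
  have h2 := Real.sqrt_le_sqrt this
  rwa [Real.sqrt_sq (norm_nonneg _), Real.sqrt_sq (opNorm_nonneg M)] at h2

lemma unitary_mulVec_sq_sum {ι : Type*} [Fintype ι] [DecidableEq ι]
    (U : Matrix ι ι ℂ) (hU : U ∈ Matrix.unitaryGroup ι ℂ) (w : ι → ℂ) :
    ∑ a, ‖(U *ᵥ w) a‖^2 = ∑ i, ‖w i‖^2 := by
  rw [sum_sq_eq_re_dot, sum_sq_eq_re_dot]
  congr 1
  have h1 : Uᴴ * U = 1 := Matrix.mem_unitaryGroup_iff'.mp hU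
  rw [Matrix.star_mulVec, Matrix.dotProduct_mulVec, Matrix.vecMul_vecMul, h1, Matrix.vecMul_one]

lemma diag_mulVec_sq_sum_le {ι : Type*} [Fintype ι] [DecidableEq ι]
    (d : ι → ℂ) (hd : ∀ i, ‖d i‖ ≤ 1) (w : ι → ℂ) :
    ∑ a, ‖(Matrix.diagonal d *ᵥ w) a‖^2 ≤ ∑ i, ‖w i‖^2 := by
  apply Finset.sum_le_sum
  intro i _
  rw [Matrix.mulVec_diagonal, norm_mul]
  calc (‖d i‖ * ‖w i‖)^2 ≤ (1 * ‖w i‖)^2 := by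
        apply pow_le_pow_left₀ (mul_nonneg (norm_nonneg _) (norm_nonneg _))
        exact mul_le_mul_of_nonneg_right (hd i) (norm_nonneg _)
    _ = ‖w i‖^2 := by rw [one_mul]

lemma opNorm_conj_diag_le_one {ι : Type*} [Fintype ι] [DecidableEq ι]
    (U : Matrix ι ι ℂ) (hU : U ∈ Matrix.unitaryGroup ι ℂ)
    (d : ι → ℂ) (hd : ∀ i, ‖d i‖ ≤ 1) :
    opNorm (U * Matrix.diagonal d * Uᴴ) ≤ 1 := by
  have hU' : Uᴴ ∈ Matrix.unitaryGroup ι ℂ := by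
    rw [Matrix.mem_unitaryGroup_iff] at hU
    rw [Matrix.mem_unitaryGroup_iff']
    simpa [Matrix.star_eq_conjTranspose] using hU
  apply opNorm_le_of_sq _ _ zero_le_one
  intro v
  rw [one_pow, one_mul]
  have e : (U * Matrix.diagonal d * Uᴴ) *ᵥ v = U *ᵥ (Matrix.diagonal d *ᵥ (Uᴴ *ᵥ v)) := by
    rw [Matrix.mulVec_mulVec, Matrix.mulVec_mulVec]
  rw [e, unitary_mulVec_sq_sum U hU]
  calc ∑ a, ‖(Matrix.diagonal d *ᵥ (Uᴴ *ᵥ v)) a‖^2 ≤ ∑ a, ‖(Uᴴ *ᵥ v) a‖^2 :=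
        diag_mulVec_sq_sum_le d hd _
    _ = ∑ i, ‖v i‖^2 := unitary_mulVec_sq_sum Uᴴ hU' v

lemma opNorm_stdBasisMatrix_le_one {ι : Type*} [Fintype ι] [DecidableEq ι] (i j : ι) :
    opNorm (Matrix.single i j (1:ℂ)) ≤ 1 := by
  apply opNorm_le_of_sq _ _ zero_le_one
  intro v
  rw [one_pow, one_mul]
  have e : ∀ a, (Matrix.single i j (1:ℂ) *ᵥ v) a = if i = a then v j else 0 := by
    intro a
    simp [Matrix.mulVec, dotProduct, Matrix.single, ite_and]
  calc ∑ a, ‖(Matrix.single i j (1:ℂ) *ᵥ v) a‖^2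
      = ∑ a, if i = a then ‖v j‖^2 else 0 := by
        apply Finset.sum_congr rfl; intro a _; rw [e a]; split <;> simp
    _ = ‖v j‖^2 := by rw [Finset.sum_ite_eq Finset.univ i (fun _ => ‖v j‖^2)]; simp
    _ ≤ ∑ b, ‖v b‖^2 := Finset.single_le_sum (f := fun b => ‖v b‖^2)
        (fun _ _ => sq_nonneg _) (Finset.mem_univ j)

lemma opNorm_block_le {ιA ιB : Type*} [Fintype ιA] [Fintype ιB] [DecidableEq ιA] [DecidableEq ιB]
    (Z : Matrix (ιA × ιB) (ιA × ιB) ℂ) (i j : ιB) :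
    opNorm (Matrix.of fun a b => Z (a,i) (b,j)) ≤ opNorm Z := by
  apply opNorm_le_of_sq _ _ (opNorm_nonneg Z)
  intro v
  set w : ιA × ιB → ℂ := fun p => if p.2 = j then v p.1 else 0 with hw
  have key1 : ∀ a, ((Matrix.of fun a b => Z (a,i) (b,j)) *ᵥ v) a = (Z *ᵥ w) (a, i) := by
    intro a
    simp only [Matrix.mulVec, dotProduct, Matrix.of_apply, hw]
    rw [Fintype.sum_prod_type]
    apply Finset.sum_congr rfl
    intro b _
    rw [Finset.sum_eq_single j]
    · simp
    · intro j' _ hj'; simp [hj']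
    · simp
  have key3 : ∑ p, ‖w p‖^2 = ∑ b, ‖v b‖^2 := by
    rw [Fintype.sum_prod_type]
    apply Finset.sum_congr rfl
    intro b _
    rw [Finset.sum_eq_single j]
    · simp [hw]
    · intro j' _ hj'; simp [hw, hj']
    · simp
  calc ∑ a, ‖((Matrix.of fun a b => Z (a,i) (b,j)) *ᵥ v) a‖^2
      = ∑ a, ‖(Z *ᵥ w) (a, i)‖^2 := by
        apply Finset.sum_congr rfl; intro a _; rw [key1 a]
    _ ≤ ∑ p, ‖(Z *ᵥ w) p‖^2 := by
        rw [Fintype.sum_prod_type]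
        apply Finset.sum_le_sum
        intro a _
        exact Finset.single_le_sum (f := fun i' => ‖(Z *ᵥ w) (a, i')‖^2)
          (fun _ _ => sq_nonneg _) (Finset.mem_univ i)
    _ ≤ (opNorm Z)^2 * ∑ p, ‖w p‖^2 := mulVec_sq_sum_le Z w
    _ = (opNorm Z)^2 * ∑ b, ‖v b‖^2 := by rw [key3]

lemma trace_mul_eq_sum {n : Type*} [Fintype n] (A B : Matrix n n ℂ) :
    (A * B).trace = ∑ p, ∑ q, A p q * B q p := by
  simp [Matrix.trace, Matrix.mul_apply, Matrix.diag]

lemma sum4_comm {α β γ δ : Type*} [Fintype α] [Fintype β] [Fintype γ] [Fintype δ]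
    (F : α → β → γ → δ → ℂ) :
    ∑ a, ∑ i, ∑ b, ∑ j, F a i b j = ∑ i, ∑ j, ∑ a, ∑ b, F a i b j := by
  rw [Finset.sum_comm]
  apply Finset.sum_congr rfl; intro i _
  calc ∑ a, ∑ b, ∑ j, F a i b j = ∑ a, ∑ j, ∑ b, F a i b j := by
        apply Finset.sum_congr rfl; intro a _; exact Finset.sum_comm
    _ = ∑ j, ∑ a, ∑ b, F a i b j := Finset.sum_comm

lemma kron_std_trace {ιA ιB : Type*} [Fintype ιA] [Fintype ιB] [DecidableEq ιA] [DecidableEq ιB]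
    (Z Δ : Matrix (ιA × ιB) (ιA × ιB) ℂ) (i j : ιB) :
    (((Matrix.of fun a b => Z (a,i) (b,j)) ⊗ₖ Matrix.single i j (1:ℂ)) * Δ).trace
      = ∑ a, ∑ b, Z (a,i) (b,j) * Δ (b,j) (a,i) := by
  rw [trace_mul_eq_sum]
  simp_rw [Fintype.sum_prod_type]
  simp [Matrix.single, ite_and, mul_ite, ite_mul, mul_one, mul_zero, zero_mul,
    Finset.sum_ite_irrel, Finset.sum_ite_eq, Finset.sum_ite_eq']

lemma trace_decomp {ιA ιB : Type*} [Fintype ιA] [Fintype ιB] [DecidableEq ιA] [DecidableEq ιB]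
    (Z Δ : Matrix (ιA × ιB) (ιA × ιB) ℂ) :
    (Z * Δ).trace = ∑ i : ιB, ∑ j : ιB,
      (((Matrix.of fun a b => Z (a,i) (b,j)) ⊗ₖ Matrix.single i j (1:ℂ)) * Δ).trace := by
  simp_rw [kron_std_trace Z Δ]
  rw [trace_mul_eq_sum]
  simp_rw [Fintype.sum_prod_type]
  exact sum4_comm (fun a i b j => Z (a,i) (b,j) * Δ (b,j) (a,i))

lemma sign_mul_self_abs (x : ℝ) : Real.sign x * x = |x| := by
  rcases lt_trichotomy x 0 with h | h | h
  · rw [Real.sign_of_neg h, abs_of_neg h]; ring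
  · simp [h]
  · rw [Real.sign_of_pos h, abs_of_pos h]; ring

lemma abs_sign_le_one (x : ℝ) : |Real.sign x| ≤ 1 := by
  rcases Real.sign_apply_eq x with h | h | h <;> rw [h] <;> norm_num

lemma conj_diag_mul_conj_diag {ι : Type*} [Fintype ι] [DecidableEq ι]
    (U : Matrix ι ι ℂ) (hU1 : Uᴴ * U = 1) (c d : ι → ℂ) :
    (U * Matrix.diagonal c * Uᴴ) * (U * Matrix.diagonal d * Uᴴ)
      = U * Matrix.diagonal (fun p => c p * d p) * Uᴴ := by
  have : (U * Matrix.diagonal c * Uᴴ) * (U * Matrix.diagonal d * Uᴴ)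
      = U * (Matrix.diagonal c * ((Uᴴ * U) * Matrix.diagonal d)) * Uᴴ := by
    simp only [Matrix.mul_assoc]
  rw [this, hU1, one_mul, Matrix.diagonal_mul_diagonal]

lemma trace_conj_diag {ι : Type*} [Fintype ι] [DecidableEq ι]
    (U : Matrix ι ι ℂ) (hU1 : Uᴴ * U = 1) (c : ι → ℂ) :
    (U * Matrix.diagonal c * Uᴴ).trace = ∑ p, c p := by
  rw [Matrix.trace_mul_cycle, hU1, one_mul, Matrix.trace_diagonal]

theorem traceNorm_le_locking {ιA ιB : Type*} [Fintype ιA] [Fintype ιB]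
    [DecidableEq ιA] [DecidableEq ιB]
    (Δ : Matrix (ιA × ιB) (ιA × ιB) ℂ) (hΔ : Δ.IsHermitian) :
    traceNorm Δ ≤ (Fintype.card ιB : ℝ) ^ 2 *
      sSup {r : ℝ | ∃ (X : Matrix ιA ιA ℂ) (Y : Matrix ιB ιB ℂ),
        opNorm X ≤ 1 ∧ opNorm Y ≤ 1 ∧ r = ‖((X ⊗ₖ Y) * Δ).trace‖} := by
  classical
  set U : Matrix (ιA × ιB) (ιA × ιB) ℂ := hΔ.eigenvectorUnitary.1 with hUdef
  have hU : U ∈ Matrix.unitaryGroup (ιA × ιB) ℂ := hΔ.eigenvectorUnitary.2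
  have hU1 : Uᴴ * U = 1 := Matrix.mem_unitaryGroup_iff'.mp hU
  set lam := hΔ.eigenvalues with hlam
  have hspec : Δ = U * Matrix.diagonal (fun p => (lam p : ℂ)) * Uᴴ := by
    have := hΔ.spectral_theorem
    rw [Unitary.conjStarAlgAut_apply, Matrix.star_eq_conjTranspose] at this
    exact this
  -- Step A : traceNorm Δ = ∑ |lam p|
  set S := U * Matrix.diagonal (fun p => ((|lam p| : ℝ) : ℂ)) * Uᴴ with hSdef
  have hSpsd : S.PosSemidef := by
    apply Matrix.PosSemidef.mul_mul_conjTranspose_same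
    exact Matrix.posSemidef_diagonal_iff.mpr fun p => Complex.zero_le_real.mpr (abs_nonneg _)
  have hSsq : S ^ 2 = Δᴴ * Δ := by
    rw [pow_two, hΔ.eq, hSdef, conj_diag_mul_conj_diag U hU1]
    rw [hspec, conj_diag_mul_conj_diag U hU1]
    simp only [← Complex.ofReal_mul, abs_mul_abs_self]
  have htr : traceNorm Δ = ∑ p, |lam p| := by
    have h1 : traceNorm Δ =
        ((Matrix.posSemidef_conjTranspose_mul_self Δ).1.cfc Real.sqrt).trace.re := by
      rw [traceNorm, Matrix.IsHermitian.cfc, Unitary.conjStarAlgAut_apply]; rfl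
    have h2 : Δᴴ * Δ = Δ ^ 2 := by rw [hΔ.eq, pow_two]
    have h3 : cfc Real.sqrt (Δ ^ 2) = cfc (fun x : ℝ => |x|) Δ := by
      rw [← cfc_comp_pow Real.sqrt 2 Δ (ha := hΔ.isSelfAdjoint)]
      simp only [Real.sqrt_sq_eq_abs]
    rw [h1, ← Matrix.IsHermitian.cfc_eq, h2, h3, hΔ.cfc_eq]
    refine (congrArg Complex.re (trace_conj_diag U hU1 (fun p => ((|lam p| : ℝ) : ℂ)))).trans ?_
    rw [Complex.re_sum]
    simp
  -- Step B : the sign matrix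
  set s : (ιA × ιB) → ℂ := fun p => ((Real.sign (lam p) : ℝ) : ℂ) with hsdef
  set Z := U * Matrix.diagonal s * Uᴴ with hZdef
  have hZnorm : opNorm Z ≤ 1 := by
    apply opNorm_conj_diag_le_one U hU
    intro p
    rw [hsdef, Complex.norm_real, Real.norm_eq_abs]
    exact abs_sign_le_one _
  have htrZ : (Z * Δ).trace = ((∑ p, |lam p| : ℝ) : ℂ) := by
    rw [hZdef, hspec, conj_diag_mul_conj_diag U hU1, trace_conj_diag U hU1]
    push_cast
    apply Finset.sum_congr rfl
    intro p _
    rw [hsdef]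
    push_cast
    rw [← Complex.ofReal_mul, sign_mul_self_abs]
  -- Step C : decomposition and sup bound
  set SetS := {r : ℝ | ∃ (X : Matrix ιA ιA ℂ) (Y : Matrix ιB ιB ℂ),
      opNorm X ≤ 1 ∧ opNorm Y ≤ 1 ∧ r = ‖((X ⊗ₖ Y) * Δ).trace‖} with hSetS
  have hbdd : BddAbove SetS := by
    refine ⟨∑ p : ιA × ιB, ∑ q : ιA × ιB, ‖Δ q p‖, ?_⟩
    rintro r ⟨X, Y, hX, hY, rfl⟩
    rw [trace_mul_eq_sum]
    calc ‖∑ p, ∑ q, (X ⊗ₖ Y) p q * Δ q p‖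
        ≤ ∑ p, ‖∑ q, (X ⊗ₖ Y) p q * Δ q p‖ := by
          exact norm_sum_le Finset.univ _
      _ ≤ ∑ p, ∑ q, ‖(X ⊗ₖ Y) p q * Δ q p‖ := by
          apply Finset.sum_le_sum; intro p _
          exact norm_sum_le Finset.univ _
      _ ≤ ∑ p, ∑ q, ‖Δ q p‖ := by
          apply Finset.sum_le_sum; intro p _
          apply Finset.sum_le_sum; intro q _
          rw [norm_mul]
          have h1 : ‖(X ⊗ₖ Y) p q‖ ≤ 1 := by
            obtain ⟨a, i⟩ := p; obtain ⟨b, j⟩ := q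
            rw [Matrix.kroneckerMap_apply, norm_mul]
            calc ‖X a b‖ * ‖Y i j‖
                ≤ 1 * 1 := by
                  apply mul_le_mul _ _ (norm_nonneg _) zero_le_one
                  · exact le_trans (entry_le_opNorm X a b) hX
                  · exact le_trans (entry_le_opNorm Y i j) hY
              _ = 1 := one_mul 1
          calc ‖(X ⊗ₖ Y) p q‖ * ‖Δ q p‖
              ≤ 1 * ‖Δ q p‖ :=
                mul_le_mul_of_nonneg_right h1 (norm_nonneg _)
            _ = ‖Δ q p‖ := one_mul _
  have hmem : ∀ i j : ιB,
      ‖(((Matrix.of fun a b => Z (a,i) (b,j)) ⊗ₖ Matrix.single i j (1:ℂ)) * Δ).trace‖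
        ∈ SetS := by
    intro i j
    exact ⟨Matrix.of fun a b => Z (a,i) (b,j), Matrix.single i j (1:ℂ),
      le_trans (opNorm_block_le Z i j) hZnorm, opNorm_stdBasisMatrix_le_one i j, rfl⟩
  calc traceNorm Δ = ∑ p, |lam p| := htr
    _ = ((Z * Δ).trace).re := by rw [htrZ, Complex.ofReal_re]
    _ ≤ ‖(Z * Δ).trace‖ := Complex.re_le_norm _
    _ = ‖∑ i : ιB, ∑ j : ιB,
        (((Matrix.of fun a b => Z (a,i) (b,j)) ⊗ₖ Matrix.single i j (1:ℂ)) * Δ).trace‖ := by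
          rw [← trace_decomp]
    _ ≤ ∑ i : ιB, ∑ j : ιB, ‖(((Matrix.of fun a b => Z (a,i) (b,j)) ⊗ₖ Matrix.single i j (1:ℂ)) * Δ).trace‖ := by
          calc ‖_‖ ≤ ∑ i : ιB, ‖_‖ := by
                exact norm_sum_le Finset.univ _
            _ ≤ _ := by
                apply Finset.sum_le_sum; intro i _
                exact norm_sum_le Finset.univ _
    _ ≤ ∑ _i : ιB, ∑ _j : ιB, sSup SetS := by
          apply Finset.sum_le_sum; intro i _
          apply Finset.sum_le_sum; intro j _
          exact le_csSup hbdd (hmem i j)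
    _ = (Fintype.card ιB : ℝ) ^ 2 * sSup SetS := by
          simp [Finset.sum_const, Finset.card_univ, nsmul_eq_mul]
          ring
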